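/- Let P₀,…,P_m be a symmetric Clifford system on ℝ^{2l}, P = Σ_β a_β P_β with Σ a_β² = 1, and let x be a unit vector with Σ_α ⟨P_α x, x⟩² = 1. Set 𝒫 = Σ_α ⟨P_α x, x⟩ P_α and y = Px − ⟨Px, x⟩x. Then y + 𝒫y = 0, i.e., y lies in the (−1)-eigenspace of 𝒫. -/

import Mathlib

open Matrix

/-- y = Px − ⟨Px,x⟩x lies in the (−1)-eigenspace of 𝒫, i.e. y + 𝒫y = 0. -/
theorem y_in_minus_eigenspace (l m : ℕ)
    (P : Fin (m + 1) → Matrix (Fin (2 * l)) (Fin (2 * l)) ℝ)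
    (hsym : ∀ i, (P i)ᵀ = P i)
    (hcliff : ∀ i j, P i * P j + P j * P i =
      if i = j then (2 : ℝ) • (1 : Matrix (Fin (2 * l)) (Fin (2 * l)) ℝ) else 0)
    (a : Fin (m + 1) → ℝ) (ha : ∑ β, (a β) ^ 2 = 1)
    (x : Fin (2 * l) → ℝ) (hx : x ⬝ᵥ x = 1)
    (hM : ∑ α, ((P α).mulVec x ⬝ᵥ x) ^ 2 = 1) :
    (∑ β, a β • P β).mulVec x - ((∑ β, a β • P β).mulVec x ⬝ᵥ x) • x +
      (∑ α, ((P α).mulVec x ⬝ᵥ x) • P α).mulVec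
        ((∑ β, a β • P β).mulVec x - ((∑ β, a β • P β).mulVec x ⬝ᵥ x) • x) = 0 := by
  set c : Fin (m + 1) → ℝ := fun α => (P α).mulVec x ⬝ᵥ x with hc
  set Q : Matrix (Fin (2 * l)) (Fin (2 * l)) ℝ := ∑ α, c α • P α with hQ
  set PM : Matrix (Fin (2 * l)) (Fin (2 * l)) ℝ := ∑ β, a β • P β with hPM
  -- sums commute with mulVec and dotProduct
  have hmv : ∀ A : Fin (m + 1) → Matrix (Fin (2 * l)) (Fin (2 * l)) ℝ,
      (∑ i, A i) *ᵥ x = ∑ i, A i *ᵥ x := fun A =>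
    map_sum (Matrix.mulVec.addMonoidHomLeft x) A Finset.univ
  have hdp : ∀ f : Fin (m + 1) → (Fin (2 * l) → ℝ),
      (∑ i, f i) ⬝ᵥ x = ∑ i, f i ⬝ᵥ x := by
    intro f
    simp only [dotProduct, Finset.sum_apply, Finset.sum_mul]
    exact Finset.sum_comm
  -- generic anticommutator computation
  have key : ∀ u v : Fin (m + 1) → ℝ,
      (∑ α, u α • P α) * (∑ β, v β • P β) + (∑ β, v β • P β) * (∑ α, u α • P α)
        = (2 * ∑ α, u α * v α) • (1 : Matrix (Fin (2 * l)) (Fin (2 * l)) ℝ) := by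
    intro u v
    have h1 : (∑ α, u α • P α) * (∑ β, v β • P β)
        = ∑ α, ∑ β, (u α * v β) • (P α * P β) := by
      rw [Finset.sum_mul]
      refine Finset.sum_congr rfl fun α _ => ?_
      rw [Finset.mul_sum]
      refine Finset.sum_congr rfl fun β _ => ?_
      rw [smul_mul_assoc, mul_smul_comm, smul_smul]
    have h2 : (∑ β, v β • P β) * (∑ α, u α • P α)
        = ∑ α, ∑ β, (u α * v β) • (P β * P α) := by
      rw [Finset.sum_mul, Finset.sum_comm]
      refine Finset.sum_congr rfl fun α _ => ?_
      rw [Finset.mul_sum]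
      refine Finset.sum_congr rfl fun β _ => ?_
      rw [smul_mul_assoc, mul_smul_comm, smul_smul, mul_comm (v α) (u β)]
    rw [h1, h2, ← Finset.sum_add_distrib]
    have hα : ∀ α, (∑ β, (u α * v β) • (P α * P β)) + (∑ β, (u α * v β) • (P β * P α))
        = (2 * (u α * v α)) • (1 : Matrix (Fin (2 * l)) (Fin (2 * l)) ℝ) := by
      intro α
      rw [← Finset.sum_add_distrib]
      have hβ : ∀ β, (u α * v β) • (P α * P β) + (u α * v β) • (P β * P α)
          = (u α * v β) • (if α = β then (2 : ℝ) • (1 : Matrix (Fin (2 * l)) (Fin (2 * l)) ℝ) else 0) := by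
        intro β
        rw [← smul_add, hcliff α β]
      simp only [hβ, smul_ite, smul_zero, Finset.sum_ite_eq, Finset.mem_univ, if_true]
      rw [smul_smul, mul_comm (u α * v α) 2]
    simp only [hα]
    rw [← Finset.sum_smul, ← Finset.mul_sum]
  have hcsq : ∑ α, c α * c α = 1 := by
    simpa [sq] using hM
  have hQQ : Q * Q = 1 := by
    have h := key c c
    rw [hcsq, mul_one, ← hQ] at h
    have h2 : (2 : ℝ) • (Q * Q) = (2 : ℝ) • (1 : Matrix (Fin (2 * l)) (Fin (2 * l)) ℝ) := by
      rw [two_smul ℝ (Q * Q)]; exact h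
    exact smul_right_injective _ (two_ne_zero) h2
  have hQsym : Qᵀ = Q := by
    rw [hQ, Matrix.transpose_sum]
    refine Finset.sum_congr rfl fun α _ => ?_
    rw [Matrix.transpose_smul, hsym]
  have hQxx : Q *ᵥ x ⬝ᵥ x = 1 := by
    rw [hQ, hmv, hdp]
    simp only [Matrix.smul_mulVec, smul_dotProduct, smul_eq_mul]
    exact hcsq
  have hQx : Q *ᵥ x = x := by
    have hQQx : Q *ᵥ (Q *ᵥ x) = x := by
      rw [Matrix.mulVec_mulVec, hQQ, Matrix.one_mulVec]
    have hQxQx : (Q *ᵥ x) ⬝ᵥ (Q *ᵥ x) = 1 := by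
      rw [Matrix.dotProduct_mulVec, ← Matrix.mulVec_transpose, hQsym, hQQx, hx]
    have hd : (Q *ᵥ x - x) ⬝ᵥ (Q *ᵥ x - x) = 0 := by
      rw [sub_dotProduct, dotProduct_sub, dotProduct_sub,
        hQxQx, hQxx, dotProduct_comm x (Q *ᵥ x), hQxx, hx]
      ring
    exact sub_eq_zero.mp (dotProduct_self_eq_zero.mp hd)
  set s : ℝ := PM *ᵥ x ⬝ᵥ x with hs
  have hsval : s = ∑ β, a β * c β := by
    rw [hs, hPM, hmv, hdp]
    simp only [Matrix.smul_mulVec, smul_dotProduct, smul_eq_mul]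
    rfl
  have hanti : PM * Q + Q * PM = (2 * s) • 1 := by
    have h := key a c
    rw [← hsval, ← hQ, ← hPM] at h
    exact h
  have hQPM : Q * PM = (2 * s) • 1 - PM * Q := by
    rw [← hanti]; abel
  have hQy : Q *ᵥ (PM *ᵥ x - s • x) = s • x - PM *ᵥ x := by
    rw [Matrix.mulVec_sub, Matrix.mulVec_smul, hQx, Matrix.mulVec_mulVec, hQPM,
      Matrix.sub_mulVec, Matrix.smul_mulVec, Matrix.one_mulVec,
      ← Matrix.mulVec_mulVec, hQx]
    module
  rw [hQy]
  abel
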